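/- Let ψ : ℝ → ℝ be differentiable with ψ' Lipschitz with constant L_R on (−R, R). Let (Ω, μ) be a probability space, c measurable, and for g ∈ L^∞(μ) and r ∈ L²(μ) set dF(g)(r) = ∫ (ψ'(g − c) − 1) r dμ. Then for g, g̃ ∈ L^∞(μ) with ‖g − c‖_∞ < R, ‖g̃ − c‖_∞ < R, and all r ∈ L²(μ): |dF(g̃)(r) − dF(g)(r)| ≤ L_R ‖g̃ − g‖_{L²(μ)} ‖r‖_{L²(μ)}. -/

import Mathlib

open MeasureTheory

/-- Lipschitz continuity of the Gâteaux differential `dF(g)(r) = ∫ (ψ'(g−c) − 1) r dμ`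
on `L^∞`-balls around `c`, with respect to the `L²` norms. -/
theorem stmt7 {Ω : Type*} [MeasurableSpace Ω] (μ : Measure Ω) [IsProbabilityMeasure μ]
    (ψ : ℝ → ℝ) (hψ : Differentiable ℝ ψ) (R LR : ℝ) (hR : 0 < R) (hL : 0 ≤ LR)
    (hlip : ∀ s ∈ Set.Ioo (-R) R, ∀ t ∈ Set.Ioo (-R) R,
      |deriv ψ s - deriv ψ t| ≤ LR * |s - t|)
    (c g g' : Ω → ℝ) (hc : Measurable c) (hg : Measurable g) (hg' : Measurable g')
    (hgb : ∀ᵐ ω ∂μ, |g ω - c ω| < R) (hg'b : ∀ᵐ ω ∂μ, |g' ω - c ω| < R)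
    (r : Ω → ℝ) (hr : Measurable r) (hr2 : MemLp r 2 μ) :
    |(∫ ω, (deriv ψ (g' ω - c ω) - 1) * r ω ∂μ)
        - ∫ ω, (deriv ψ (g ω - c ω) - 1) * r ω ∂μ|
      ≤ LR * Real.sqrt (∫ ω, (g' ω - g ω) ^ 2 ∂μ) * Real.sqrt (∫ ω, r ω ^ 2 ∂μ) := by
  have hder : Measurable (deriv ψ) := measurable_deriv ψ
  have hrint : Integrable r μ := hr2.integrable (by norm_num)
  -- a.e. bound on deriv ψ composed with a function valued in (-R, R)
  have h0mem : (0 : ℝ) ∈ Set.Ioo (-R) R := ⟨by linarith, hR⟩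
  set M : ℝ := |deriv ψ 0| + LR * R + 1 with hM
  have hbd : ∀ x, |x| < R → ‖deriv ψ x - 1‖ ≤ M := by
    intro x hx
    have hxmem : x ∈ Set.Ioo (-R) R := abs_lt.mp hx
    have := hlip x hxmem 0 h0mem
    have hxa : |x - 0| ≤ R := by rw [sub_zero]; exact le_of_lt hx
    have h1 : |deriv ψ x - deriv ψ 0| ≤ LR * R := le_trans this
      (by nlinarith [abs_nonneg (x - 0)])
    have : |deriv ψ x - 1| ≤ |deriv ψ x - deriv ψ 0| + |deriv ψ 0| + 1 := by
      have := abs_sub_abs_le_abs_sub (deriv ψ x) (deriv ψ 0)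
      have h2 := abs_sub (deriv ψ x) (1 : ℝ)
      calc |deriv ψ x - 1| ≤ |deriv ψ x| + |(1:ℝ)| := abs_sub _ _
        _ = |deriv ψ x - deriv ψ 0 + deriv ψ 0| + 1 := by norm_num
        _ ≤ |deriv ψ x - deriv ψ 0| + |deriv ψ 0| + 1 := by
            have := abs_add_le (deriv ψ x - deriv ψ 0) (deriv ψ 0)
            linarith
    rw [Real.norm_eq_abs]
    linarith
  have hmeasg : AEStronglyMeasurable (fun ω => deriv ψ (g ω - c ω) - 1) μ :=
    ((hder.comp (hg.sub hc)).sub measurable_const).aestronglyMeasurable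
  have hmeasg' : AEStronglyMeasurable (fun ω => deriv ψ (g' ω - c ω) - 1) μ :=
    ((hder.comp (hg'.sub hc)).sub measurable_const).aestronglyMeasurable
  have hIg : Integrable (fun ω => (deriv ψ (g ω - c ω) - 1) * r ω) μ :=
    hrint.bdd_mul hmeasg (by filter_upwards [hgb] with ω hω using hbd _ hω)
  have hIg' : Integrable (fun ω => (deriv ψ (g' ω - c ω) - 1) * r ω) μ :=
    hrint.bdd_mul hmeasg' (by filter_upwards [hg'b] with ω hω using hbd _ hω)
  rw [← integral_sub hIg' hIg]
  have heq : ∀ ω, (deriv ψ (g' ω - c ω) - 1) * r ω - (deriv ψ (g ω - c ω) - 1) * r ω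
      = (deriv ψ (g' ω - c ω) - deriv ψ (g ω - c ω)) * r ω := fun ω => by ring
  simp only [heq]
  -- the difference function and the dominating function
  have hIdiff : Integrable (fun ω => (deriv ψ (g' ω - c ω) - deriv ψ (g ω - c ω)) * r ω) μ := by
    refine (hIg'.sub hIg).congr (Filter.Eventually.of_forall fun ω => ?_)
    simp only [Pi.sub_apply]; ring
  have hgg'bd : ∀ᵐ ω ∂μ, ‖g' ω - g ω‖ ≤ 2 * R := by
    filter_upwards [hgb, hg'b] with ω h1 h2
    rw [Real.norm_eq_abs]
    have : |g' ω - g ω| ≤ |g' ω - c ω| + |g ω - c ω| := abs_sub_le _ _ _ |>.trans (by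
      rw [abs_sub_comm (c ω) (g ω)])
    linarith
  have hIdom : Integrable (fun ω => LR * (|g' ω - g ω| * |r ω|)) μ := by
    refine Integrable.const_mul ?_ LR
    exact hrint.abs.bdd_mul ((hg'.sub hg).abs.aestronglyMeasurable)
      (by filter_upwards [hgg'bd] with ω hω; simpa [abs_abs] using hω)
  calc |∫ ω, (deriv ψ (g' ω - c ω) - deriv ψ (g ω - c ω)) * r ω ∂μ|
      ≤ ∫ ω, ‖(deriv ψ (g' ω - c ω) - deriv ψ (g ω - c ω)) * r ω‖ ∂μ := by
        exact (Real.norm_eq_abs _) ▸ norm_integral_le_integral_norm _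
    _ ≤ ∫ ω, LR * (|g' ω - g ω| * |r ω|) ∂μ := by
        refine integral_mono_ae hIdiff.norm hIdom ?_
        filter_upwards [hgb, hg'b] with ω h1 h2
        have hmem1 : g' ω - c ω ∈ Set.Ioo (-R) R := abs_lt.mp h2
        have hmem2 : g ω - c ω ∈ Set.Ioo (-R) R := abs_lt.mp h1
        have := hlip _ hmem1 _ hmem2
        have hsimp : g' ω - c ω - (g ω - c ω) = g' ω - g ω := by ring
        rw [hsimp] at this
        rw [norm_mul, Real.norm_eq_abs, Real.norm_eq_abs]
        exact le_trans (mul_le_mul_of_nonneg_right this (abs_nonneg _)) (le_of_eq (by ring))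
    _ = LR * ∫ ω, |g' ω - g ω| * |r ω| ∂μ := integral_const_mul _ _
    _ ≤ LR * Real.sqrt (∫ ω, (g' ω - g ω) ^ 2 ∂μ) * Real.sqrt (∫ ω, r ω ^ 2 ∂μ) := by
        rw [mul_assoc]
        refine mul_le_mul_of_nonneg_left ?_ hL
        have hpq : Real.HolderConjugate 2 2 := ⟨by norm_num, by norm_num, by norm_num⟩
        have hm1 : MemLp (fun ω => |g' ω - g ω|) (ENNReal.ofReal 2) μ := by
          have : MemLp (fun ω => g' ω - g ω) (ENNReal.ofReal 2) μ :=
            MemLp.of_bound ((hg'.sub hg).aestronglyMeasurable) (2 * R) hgg'bd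
          simpa [Real.norm_eq_abs] using this.norm
        have hm2 : MemLp (fun ω => |r ω|) (ENNReal.ofReal 2) μ := by
          have : (ENNReal.ofReal 2) = 2 := by norm_num
          rw [this]
          simpa [Real.norm_eq_abs] using hr2.norm
        have := integral_mul_le_Lp_mul_Lq_of_nonneg hpq
          (Filter.Eventually.of_forall fun ω => abs_nonneg (g' ω - g ω))
          (Filter.Eventually.of_forall fun ω => abs_nonneg (r ω)) hm1 hm2
        refine this.trans (le_of_eq ?_)
        have e1 : ∀ (f : Ω → ℝ), (∫ ω, |f ω| ^ (2:ℝ) ∂μ) = ∫ ω, f ω ^ 2 ∂μ := by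
          intro f
          refine integral_congr_ae (Filter.Eventually.of_forall fun ω => ?_)
          show |f ω| ^ (2:ℝ) = f ω ^ 2
          rw [show ((2:ℝ)) = ((2:ℕ):ℝ) by norm_num, Real.rpow_natCast, sq_abs]
        rw [e1, e1, Real.sqrt_eq_rpow, Real.sqrt_eq_rpow]
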